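/- For every x > 0, ((x+1)/(x+2)) · (1 + 1/x)^(x+3/2) > e. -/

import Mathlib

lemma pade_log (t : ℝ) (ht : 0 ≤ t) : 2 * t / (2 + t) ≤ Real.log (1 + t) := by
  set f : ℝ → ℝ := fun u => Real.log (1 + u) - 2 * u / (2 + u) with hf
  have hderiv : ∀ s : ℝ, 0 ≤ s → HasDerivAt f (1 / (1 + s) - 4 / (2 + s) ^ 2) s := by
    intro s hs
    have h1 : HasDerivAt (fun u : ℝ => Real.log (1 + u)) (1 / (1 + s)) s := by
      have hid : HasDerivAt (fun u : ℝ => 1 + u) 1 s := by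
        simpa using (hasDerivAt_id s).const_add (1 : ℝ)
      exact ((Real.hasDerivAt_log (by linarith : (1 : ℝ) + s ≠ 0)).comp s hid).congr_deriv (by simp)
    have h2 : HasDerivAt (fun u : ℝ => 2 * u / (2 + u)) (4 / (2 + s) ^ 2) s := by
      have hn : HasDerivAt (fun u : ℝ => 2 * u) 2 s := by
        simpa using (hasDerivAt_id s).const_mul (2 : ℝ)
      have hd : HasDerivAt (fun u : ℝ => 2 + u) 1 s := by
        simpa using (hasDerivAt_id s).const_add (2 : ℝ)
      have h := hn.div hd (by linarith : (2 : ℝ) + s ≠ 0)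
      exact h.congr_deriv (by ring)
    exact h1.sub h2
  have hmono : MonotoneOn f (Set.Ici 0) := by
    apply monotoneOn_of_deriv_nonneg (convex_Ici 0)
    · intro s hs
      exact (hderiv s hs).continuousAt.continuousWithinAt
    · intro s hs
      rw [interior_Ici] at hs
      have hs' : 0 < s := Set.mem_Ioi.mp hs
      exact (hderiv s hs'.le).differentiableAt.differentiableWithinAt
    · intro s hs
      rw [interior_Ici] at hs
      have hs' : 0 < s := Set.mem_Ioi.mp hs
      rw [(hderiv s hs'.le).deriv]
      rw [sub_nonneg, div_le_div_iff₀ (pow_pos (by linarith) 2) (by linarith)]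
      nlinarith
  have h0 : f 0 ≤ f t := hmono Set.self_mem_Ici (Set.mem_Ici.mpr ht) ht
  have h0' : (0 : ℝ) ≤ Real.log (1 + t) - 2 * t / (2 + t) := by
    simpa [hf] using h0
  linarith

theorem h2_gt_e (x : ℝ) (hx : 0 < x) :
    Real.exp 1 < ((x + 1) / (x + 2)) * (1 + 1 / x) ^ (x + 3 / 2) := by
  have hx1 : (0 : ℝ) < x + 1 := by linarith
  have hx2 : (0 : ℝ) < x + 2 := by linarith
  have hb : (0 : ℝ) < 1 + 1 / x := by positivity
  have hA : 0 < ((x + 1) / (x + 2)) * (1 + 1 / x) ^ (x + 3 / 2) := by positivity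
  rw [← Real.exp_log hA]
  apply Real.exp_lt_exp.mpr
  rw [Real.log_mul (by positivity) (by positivity), Real.log_rpow hb,
    Real.log_div hx1.ne' hx2.ne']
  -- Goal: 1 < log(x+1) - log(x+2) + (x + 3/2) * log(1 + 1/x)
  have hL : 2 / (2 * x + 1) ≤ Real.log (1 + 1 / x) := by
    have h := pade_log (1 / x) (by positivity)
    have he : 2 * (1 / x) / (2 + 1 / x) = 2 / (2 * x + 1) := by
      field_simp
    rw [he] at h
    exact h
  have hU : Real.log (x + 2) - Real.log (x + 1) ≤ 1 / (x + 1) := by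
    have h := Real.log_le_sub_one_of_pos (show 0 < (x + 2) / (x + 1) by positivity)
    rw [Real.log_div hx2.ne' hx1.ne'] at h
    have he : (x + 2) / (x + 1) - 1 = 1 / (x + 1) := by
      rw [div_sub_one hx1.ne']
      congr 1
      ring
    linarith
  have hmul : (2 * x + 3) / (2 * x + 1) ≤ (x + 3 / 2) * Real.log (1 + 1 / x) := by
    have hpos : (0 : ℝ) ≤ x + 3 / 2 := by linarith
    calc (2 * x + 3) / (2 * x + 1) = (x + 3 / 2) * (2 / (2 * x + 1)) := by
          field_simp
      _ ≤ (x + 3 / 2) * Real.log (1 + 1 / x) := mul_le_mul_of_nonneg_left hL hpos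
  have hfin : 1 + 1 / (x + 1) < (2 * x + 3) / (2 * x + 1) := by
    have key : (2 * x + 3) / (2 * x + 1) - (1 + 1 / (x + 1)) = 1 / ((2 * x + 1) * (x + 1)) := by
      field_simp
      ring
    have hpos : (0 : ℝ) < 1 / ((2 * x + 1) * (x + 1)) := by positivity
    linarith
  linarith
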